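/- arXiv:1602.01304 — 2 statements merged into one kernel-verified Lean document; each statement's English description precedes it below -/
import Mathlib

section
/- For every nonnegative integer n, the determinant of the n×n matrix with (i,j) entry 1/(2i+2j−3) (for 1 ≤ i,j ≤ n) equals (1/2^n) · Π_{i=1}^n ((i−1)!)² / (i−1/2)_n. -/
open Matrix Finset

lemma my_det_col_const {m : Type*} [DecidableEq m] [Fintype m]
    {A B : Matrix m m ℝ} (c : m → ℝ) (k : m) (hk : c k = 0)
    (h : ∀ i j, A i j = B i j + c j * B i k) : A.det = B.det := by
  rw [← Matrix.det_transpose A, ← Matrix.det_transpose B]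
  exact Matrix.det_eq_of_forall_row_eq_smul_add_const c k hk fun i j => h j i

lemma cauchy_step (n : ℕ) (x y : ℕ → ℝ) (h : ∀ i j, i ≤ n → j ≤ n → x i + y j ≠ 0) :
    Matrix.det (Matrix.of fun i j : Fin (n+1) => 1 / (x i + y j)) =
      ((∏ j ∈ range (n+1), (x n + y j))⁻¹ * ∏ i ∈ range n, (x n - x i)) *
        ((∏ i ∈ range n, (x i + y n))⁻¹ * ∏ j ∈ range n, (y n - y j)) *
        Matrix.det (Matrix.of fun i j : Fin n => 1 / (x i + y j)) := by
  have hle : ∀ i : Fin (n+1), (i : ℕ) ≤ n := fun i => Nat.lt_succ_iff.mp i.isLt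
  set C : Matrix (Fin (n+1)) (Fin (n+1)) ℝ :=
    Matrix.of fun i j => if i = Fin.last n then 1 else 1 / (x i + y j) with hC
  -- Step 1&2 : det A = (∏ 1/(x n + y j)) * (∏ (x n - x i)) * det C
  have h1 : Matrix.det (Matrix.of fun i j : Fin (n+1) => 1 / (x i + y j)) =
      (∏ j ∈ range (n+1), (x n + y j))⁻¹ * ((∏ i ∈ range n, (x n - x i)) * C.det) := by
    have e1 : Matrix.det (Matrix.of fun i j : Fin (n+1) => 1 / (x i + y j)) =
        Matrix.det (Matrix.of fun i j : Fin (n+1) =>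
          (x n + y j)⁻¹ * (Matrix.of (fun i j : Fin (n+1) =>
            (if i = Fin.last n then (1:ℝ) else x n - x i) * C i j) i j)) := by
      apply Matrix.det_eq_of_forall_row_eq_smul_add_const
        (fun i => if i = Fin.last n then 0 else 1) (Fin.last n) (by simp)
      intro i j
      by_cases hi : i = Fin.last n
      · subst hi
        simp [hC, Fin.val_last, one_div]
      · simp only [Matrix.of_apply, hC, if_neg hi, if_pos rfl, one_mul, ↓reduceIte]
        have hxj := h n j (le_refl n) (hle j)
        have hxi := h i j (hle i) (hle j)
        field_simp
        ring
    rw [e1, Matrix.det_mul_row, Matrix.det_mul_column]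
    congr 1
    · rw [← Finset.prod_inv_distrib]
      exact (Fin.prod_univ_eq_prod_range (fun j => (x n + y (j:ℕ))⁻¹) (n+1))
    congr 1
    rw [Fin.prod_univ_castSucc, if_pos rfl, mul_one]
    rw [Finset.prod_congr rfl (fun i _ => if_neg (Fin.castSucc_lt_last i).ne)]
    simp only [Fin.coe_castSucc]
    exact (Fin.prod_univ_eq_prod_range (fun i => x n - x i) n)
  -- Step 3 : column operations
  set D : Matrix (Fin (n+1)) (Fin (n+1)) ℝ :=
    Matrix.of fun i j => if j = Fin.last n then C i j else C i j - C i (Fin.last n) with hD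
  have h2 : C.det = D.det := by
    apply my_det_col_const (fun j => if j = Fin.last n then 0 else 1) (Fin.last n) (by simp)
    intro i j
    by_cases hj : j = Fin.last n
    · subst hj; simp [hD]
    · simp [hD, if_neg hj]
  -- Step 4 : expand along last row
  have h3 : D.det = (D.submatrix Fin.castSucc Fin.castSucc).det := by
    rw [Matrix.det_succ_row D (Fin.last n)]
    rw [Fintype.sum_eq_single (Fin.last n)]
    · have : D (Fin.last n) (Fin.last n) = 1 := by simp [hD, hC]
      rw [this, Fin.succAbove_last]
      have : ((-1:ℝ)) ^ ((Fin.last n : ℕ) + (Fin.last n : ℕ)) = 1 :=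
        Even.neg_one_pow ⟨n, by simp [Fin.val_last]⟩
      rw [this]
      ring
    · intro j hj
      have : D (Fin.last n) j = 0 := by
        simp [hD, hC, if_neg hj]
      rw [this]
      ring
  -- Step 5 : minor
  have h4 : (D.submatrix Fin.castSucc Fin.castSucc).det =
      (∏ j ∈ range n, (y n - y j)) * ((∏ i ∈ range n, (x i + y n))⁻¹ *
        Matrix.det (Matrix.of fun i j : Fin n => 1 / (x i + y j))) := by
    have e2 : (D.submatrix Fin.castSucc Fin.castSucc) =
        Matrix.of fun i j : Fin n => (y n - y j) * (Matrix.of (fun i j : Fin n =>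
          (x i + y n)⁻¹ * (Matrix.of fun i j : Fin n => 1 / (x i + y j)) i j) i j) := by
      ext i j
      have hci : (Fin.castSucc i) ≠ Fin.last n := (Fin.castSucc_lt_last i).ne
      have hcj : (Fin.castSucc j) ≠ Fin.last n := (Fin.castSucc_lt_last j).ne
      simp only [Matrix.submatrix_apply, hD, hC, Matrix.of_apply, if_neg hci, if_neg hcj,
        Fin.coe_castSucc, Fin.val_last]
      have hxj := h i j (le_of_lt i.isLt) (le_of_lt j.isLt)
      have hxn := h i n (le_of_lt i.isLt) (le_refl n)
      rw [one_div, one_div, inv_sub_inv hxj hxn]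
      rw [div_eq_mul_inv, mul_inv]
      ring
    rw [e2, Matrix.det_mul_row, Matrix.det_mul_column]
    congr 1
    · exact (Fin.prod_univ_eq_prod_range (fun j => y n - y (j:ℕ)) n)
    congr 1
    rw [← Finset.prod_inv_distrib]
    exact (Fin.prod_univ_eq_prod_range (fun i => (x (i:ℕ) + y n)⁻¹) n)
  rw [h1, h2, h3, h4]
  ring

lemma cauchy_val (x y : ℕ → ℝ) (h : ∀ i j, x i + y j ≠ 0) (n : ℕ) :
    Matrix.det (Matrix.of fun i j : Fin n => 1 / (x i + y j)) =
      (∏ j ∈ range n, ∏ i ∈ range j, ((x j - x i) * (y j - y i))) /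
        (∏ i ∈ range n, ∏ j ∈ range n, (x i + y j)) := by
  induction n with
  | zero => simp
  | succ n ih =>
    rw [cauchy_step n x y (fun i j _ _ => h i j), ih]
    have hP : (∏ i ∈ range n, ∏ j ∈ range n, (x i + y j)) ≠ 0 :=
      Finset.prod_ne_zero_iff.mpr fun i _ => Finset.prod_ne_zero_iff.mpr fun j _ => h i j
    have hQ1 : (∏ j ∈ range (n+1), (x n + y j)) ≠ 0 :=
      Finset.prod_ne_zero_iff.mpr fun j _ => h n j
    have hQ2 : (∏ i ∈ range n, (x i + y n)) ≠ 0 :=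
      Finset.prod_ne_zero_iff.mpr fun i _ => h i n
    have eN : (∏ j ∈ range (n+1), ∏ i ∈ range j, ((x j - x i) * (y j - y i))) =
        (∏ j ∈ range n, ∏ i ∈ range j, ((x j - x i) * (y j - y i))) *
          ((∏ i ∈ range n, (x n - x i)) * (∏ i ∈ range n, (y n - y i))) := by
      rw [prod_range_succ, Finset.prod_mul_distrib]
    have eP : (∏ i ∈ range (n+1), ∏ j ∈ range (n+1), (x i + y j)) =
        ((∏ i ∈ range n, ∏ j ∈ range n, (x i + y j)) * (∏ i ∈ range n, (x i + y n))) *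
          (∏ j ∈ range (n+1), (x n + y j)) := by
      rw [prod_range_succ]
      congr 1
      rw [← Finset.prod_mul_distrib]
      exact Finset.prod_congr rfl fun i _ => (prod_range_succ _ _)
    rw [eN, eP]
    field_simp

lemma asc_eval_prod (n : ℕ) (t : ℝ) :
    (ascPochhammer ℝ n).eval t = ∏ k ∈ range n, (t + k) := by
  induction n with
  | zero => simp
  | succ n ih => rw [ascPochhammer_succ_eval, prod_range_succ, ih]

lemma prod_sub_fact (j : ℕ) : (∏ i ∈ range j, ((j:ℝ) - i)) = Nat.factorial j := by
  induction j with
  | zero => simp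
  | succ j ih =>
    rw [Finset.prod_range_succ']
    push_cast
    simp only [show ∀ i:ℕ, ((j:ℝ)+1) - ((i:ℝ)+1) = (j:ℝ) - i from fun i => by ring]
    rw [ih]
    push_cast [Nat.factorial_succ]
    ring

lemma pow42 (n : ℕ) : (∏ j ∈ range n, (4:ℝ) ^ j) * 2 ^ n = ((2:ℝ) ^ n) ^ n := by
  induction n with
  | zero => simp
  | succ n ih =>
    rw [prod_range_succ, pow_succ]
    calc (∏ j ∈ range n, (4:ℝ) ^ j) * 4 ^ n * (2 ^ n * 2)
        = ((∏ j ∈ range n, (4:ℝ) ^ j) * 2 ^ n) * (4 ^ n * 2) := by ring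
      _ = ((2:ℝ) ^ n) ^ n * (4 ^ n * 2) := by rw [ih]
      _ = ((2:ℝ) ^ (n + 1)) ^ (n + 1) := by
          rw [show (4:ℝ) = 2 ^ 2 by norm_num, ← pow_mul, ← pow_mul, ← pow_mul]
          rw [← pow_succ, ← pow_add]
          congr 1
          ring

/-- `det_{1≤i,j≤n} (1/(2i+2j−3)) = (1/2^n) Π_{i=1}^n ((i−1)!)² / (i−1/2)_n`. -/
theorem det_cauchy1 (n : ℕ) :
    Matrix.det (Matrix.of (fun i j : Fin n =>
      (1 : ℝ) / (2 * ((i : ℕ) + 1 : ℝ) + 2 * ((j : ℕ) + 1 : ℝ) - 3)))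
    = (1 / 2 ^ n) * ∏ i ∈ Finset.range n,
        ((Nat.factorial i : ℝ) ^ 2 /
          (ascPochhammer ℝ n).eval (((i : ℝ) + 1) - 1 / 2)) := by
  set x : ℕ → ℝ := fun i => 2 * i + 1 with hx
  set y : ℕ → ℝ := fun j => 2 * j with hy
  have hxy : ∀ i j : ℕ, x i + y j ≠ 0 := fun i j => by
    simp only [hx, hy]; positivity
  have hm : (Matrix.of (fun i j : Fin n =>
      (1 : ℝ) / (2 * ((i : ℕ) + 1 : ℝ) + 2 * ((j : ℕ) + 1 : ℝ) - 3))) =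
      Matrix.of fun i j : Fin n => 1 / (x i + y j) := by
    ext i j
    simp only [Matrix.of_apply, hx, hy]
    congr 1
    ring
  rw [hm, cauchy_val x y hxy n]
  have eNum : (∏ j ∈ range n, ∏ i ∈ range j, ((x j - x i) * (y j - y i))) =
      ∏ j ∈ range n, ((4:ℝ) ^ j * ((Nat.factorial j : ℝ)) ^ 2) := by
    refine prod_congr rfl fun j _ => ?_
    have e1 : ∀ i ∈ range j, (x j - x i) * (y j - y i) = 4 * ((j:ℝ) - i) ^ 2 := by
      intro i _; simp only [hx, hy]; ring
    rw [prod_congr rfl e1, Finset.prod_mul_distrib, Finset.prod_const, card_range,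
      Finset.prod_pow, prod_sub_fact]
  have eDen : (∏ i ∈ range n, ∏ j ∈ range n, (x i + y j)) =
      ∏ i ∈ range n, ((2:ℝ) ^ n *
        (ascPochhammer ℝ n).eval (((i : ℝ) + 1) - 1 / 2)) := by
    refine prod_congr rfl fun i _ => ?_
    have e1 : ∀ j ∈ range n, x i + y j = 2 * ((((i : ℝ) + 1) - 1 / 2) + j) := by
      intro j _; simp only [hx, hy]; ring
    rw [prod_congr rfl e1, Finset.prod_mul_distrib, Finset.prod_const, card_range,
      asc_eval_prod]
  have hEne : ∀ i ∈ range n, (ascPochhammer ℝ n).eval (((i : ℝ) + 1) - 1 / 2) ≠ 0 := by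
    intro i _
    rw [asc_eval_prod]
    refine ne_of_gt (Finset.prod_pos fun k _ => ?_)
    have h1 : (0:ℝ) ≤ (i:ℝ) := Nat.cast_nonneg i
    have h2 : (0:ℝ) ≤ (k:ℝ) := Nat.cast_nonneg k
    linarith
  have h42 := pow42 n
  rw [eNum, eDen, Finset.prod_mul_distrib, Finset.prod_mul_distrib, Finset.prod_const,
    card_range, Finset.prod_div_distrib]
  set A := ∏ j ∈ range n, (4:ℝ) ^ j with hA
  set E := ∏ i ∈ range n, (ascPochhammer ℝ n).eval (((i : ℝ) + 1) - 1 / 2) with hE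
  set F := ∏ i ∈ range n, ((Nat.factorial i : ℝ)) ^ 2 with hF
  have hAne : A ≠ 0 := Finset.prod_ne_zero_iff.mpr fun j _ => by positivity
  have hEneP : E ≠ 0 := Finset.prod_ne_zero_iff.mpr hEne
  have h2ne : ((2:ℝ)) ^ n ≠ 0 := by positivity
  rw [← h42]
  field_simp
end

section
/- For every integer n ≥ 2 the largest real root λ_n of F_n satisfies m(n) ≤ λ_n ≤ f_1(n), where m(n) = f_1(n)/2 + sqrt(f_1(n)²/4 − f_2(n)). Moreover λ_n < f_1(n) for n ≥ 4 and m(n) < λ_n for n ≥ 6. -/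
/-- The polynomial `F_n(λ)` from the paper:
`F_n(λ) = Σ_{j=0}^{ν} (−4)^{j−ν} ((2ν−2j+1)_n / (2j−2ν+n)!) λ^j` with `ν = ⌊n/2⌋`. -/
noncomputable def Fpoly (n : ℕ) (x : ℝ) : ℝ :=
  ∑ j ∈ Finset.range (n / 2 + 1),
    (-4 : ℝ) ^ ((j : ℤ) - ((n / 2 : ℕ) : ℤ)) *
      ((ascPochhammer ℝ n).eval (2 * ((n / 2 : ℕ) : ℝ) - 2 * (j : ℝ) + 1) /
        (Nat.factorial (n - (2 * (n / 2) - 2 * j)) : ℝ)) * x ^ j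

/-- The coefficient `f_j(n) = (n−2j+1)_{4j} / (4^j (2j)!)` from the paper. -/
noncomputable def fcoef (j n : ℕ) : ℝ :=
  (ascPochhammer ℝ (4 * j)).eval ((n : ℝ) - 2 * (j : ℝ) + 1) /
    (4 ^ j * (Nat.factorial (2 * j) : ℝ))

section Aux

lemma asc_eval_succ_left (m : ℕ) (x : ℝ) :
    (ascPochhammer ℝ (m+1)).eval x = x * (ascPochhammer ℝ m).eval (x+1) := by
  rw [ascPochhammer_succ_left]
  simp [Polynomial.eval_comp]

lemma asc_eval_succ_right (m : ℕ) (x : ℝ) :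
    (ascPochhammer ℝ (m+1)).eval x = (ascPochhammer ℝ m).eval x * (x + m) := by
  rw [ascPochhammer_succ_right]; simp

lemma asc_eval_mul (a b : ℕ) (y : ℝ) :
    (ascPochhammer ℝ (a+b)).eval y = (ascPochhammer ℝ a).eval y * (ascPochhammer ℝ b).eval (y + a) := by
  rw [← ascPochhammer_mul, Polynomial.eval_mul, Polynomial.eval_comp]
  simp

lemma asc1 (y : ℝ) : (ascPochhammer ℝ 1).eval y = y := by
  rw [ascPochhammer_one]; simp

lemma asc2 (y : ℝ) : (ascPochhammer ℝ 2).eval y = y*(y+1) := by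
  rw [show (2:ℕ) = 1+1 from rfl, asc_eval_mul, asc1, asc1]
  norm_num

lemma asc4 (y : ℝ) : (ascPochhammer ℝ 4).eval y = y*(y+1)*(y+2)*(y+3) := by
  rw [show (4:ℕ) = 2+2 from rfl, asc_eval_mul, asc2, asc2]
  norm_num; ring

lemma asc8 (y : ℝ) : (ascPochhammer ℝ 8).eval y
    = y*(y+1)*(y+2)*(y+3)*(y+4)*(y+5)*(y+6)*(y+7) := by
  rw [show (8:ℕ) = 4+4 from rfl, asc_eval_mul, asc4, asc4]
  norm_num; ring

lemma fcoef_zero (n : ℕ) : fcoef 0 n = 1 := by simp [fcoef]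

lemma fcoef_one (n : ℕ) : fcoef 1 n = (n:ℝ)*((n:ℝ)-1)*((n:ℝ)+1)*((n:ℝ)+2)/8 := by
  rw [fcoef]
  norm_num [asc4, Nat.factorial]
  ring

lemma fcoef_two (n : ℕ) : fcoef 2 n
    = ((n:ℝ)-3)*((n:ℝ)-2)*((n:ℝ)-1)*(n:ℝ)*((n:ℝ)+1)*((n:ℝ)+2)*((n:ℝ)+3)*((n:ℝ)+4)/384 := by
  rw [fcoef]
  norm_num [asc8, Nat.factorial]
  ring

lemma fcoef_succ (k n : ℕ) :
    fcoef (k+1) n * (4*(2*(k:ℝ)+1)*(2*(k:ℝ)+2)) =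
      fcoef k n * ((((n:ℝ)-2*k-1)*((n:ℝ)-2*k)) * (((n:ℝ)+2*k+1)*((n:ℝ)+2*k+2))) := by
  have e1 : 4*(k+1) = (4*k+1+1)+1+1 := by ring
  have harg : (n:ℝ) - 2*((k+1:ℕ):ℝ) + 1 = (n:ℝ) - 2*(k:ℝ) - 1 := by push_cast; ring
  have heval : (ascPochhammer ℝ (4*(k+1))).eval ((n:ℝ) - 2*(k:ℝ) - 1)
      = (((n:ℝ)-2*k-1)*((n:ℝ)-2*k)) * ((ascPochhammer ℝ (4*k)).eval ((n:ℝ)-2*k+1)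
        * (((n:ℝ)+2*k+1)*((n:ℝ)+2*k+2))) := by
    rw [e1, asc_eval_succ_left, asc_eval_succ_left, asc_eval_succ_right, asc_eval_succ_right]
    push_cast
    ring
  have e2 : 2*(k+1) = (2*k+1)+1 := by ring
  have hfac : (Nat.factorial (2*(k+1)) : ℝ) = (2*(k:ℝ)+2)*((2*(k:ℝ)+1) * (Nat.factorial (2*k) : ℝ)) := by
    rw [e2, Nat.factorial_succ, Nat.factorial_succ]
    push_cast; ring
  rw [fcoef, fcoef, harg, heval, hfac]
  have h1 : ((Nat.factorial (2*k)):ℝ) ≠ 0 := by positivity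
  have h2 : (4:ℝ)^k ≠ 0 := by positivity
  field_simp
  ring

lemma fcoef_pos {k n : ℕ} (h : 2*k ≤ n) : 0 < fcoef k n := by
  have h1 : (0:ℝ) < (n:ℝ) - 2*k + 1 := by
    have : (2*k : ℝ) ≤ (n:ℝ) := by exact_mod_cast h
    linarith
  exact div_pos (ascPochhammer_pos _ _ h1) (by positivity)

lemma coeff_eq (k n : ℕ) (h : 2*k ≤ n) :
    (ascPochhammer ℝ n).eval (2*(k:ℝ)+1) * (Nat.factorial (2*k) : ℝ)
      = (ascPochhammer ℝ (4*k)).eval ((n:ℝ) - 2*(k:ℝ) + 1) * (Nat.factorial (n - 2*k) : ℝ) := by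
  have h1 := factorial_mul_ascPochhammer ℝ (2*k) n
  have h2 := factorial_mul_ascPochhammer ℝ (n - 2*k) (4*k)
  have e1 : ((2*k : ℕ) : ℝ) + 1 = 2*(k:ℝ)+1 := by push_cast; ring
  have e2 : ((n - 2*k : ℕ) : ℝ) + 1 = (n:ℝ) - 2*(k:ℝ) + 1 := by
    rw [Nat.cast_sub h]; push_cast; ring
  have e3 : n - 2*k + 4*k = 2*k + n := by omega
  rw [e1] at h1
  rw [e2, e3] at h2
  linarith [h1, h2]

lemma Fpoly_eq (n : ℕ) (x : ℝ) :
    Fpoly n x = ∑ k ∈ Finset.range (n/2 + 1), (-1:ℝ)^k * fcoef k n * x^(n/2 - k) := by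
  rw [Fpoly, ← Finset.sum_range_reflect]
  refine Finset.sum_congr rfl (fun j hj => ?_)
  have hj' : j ≤ n/2 := by simpa [Nat.lt_succ_iff] using hj
  have hk2 : 2*j ≤ n := by omega
  have en1 : n / 2 + 1 - 1 - j = n/2 - j := by omega
  have en3 : 2*(n/2) - 2*(n/2 - j) = 2*j := by omega
  rw [en1, en3]
  have ecast : 2 * ((n/2 : ℕ) : ℝ) - 2*((n/2 - j : ℕ):ℝ) + 1 = 2*(j:ℝ) + 1 := by
    rw [Nat.cast_sub hj']; push_cast; ring
  rw [ecast]
  have ezpow : (-4:ℝ) ^ (((n/2 - j : ℕ) : ℤ) - ((n / 2 : ℕ) : ℤ))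
      = (-1:ℝ)^j * ((4:ℝ)^j)⁻¹ := by
    have e : ((n/2 - j : ℕ) : ℤ) - ((n / 2 : ℕ) : ℤ) = -(j : ℤ) := by
      push_cast [Nat.cast_sub hj']; ring
    rw [e, zpow_neg, zpow_natCast, neg_pow, mul_inv, ← inv_pow]
    norm_num
  rw [ezpow, fcoef]
  have hcq := coeff_eq j n hk2
  have hf1 : ((Nat.factorial (2*j)):ℝ) ≠ 0 := by positivity
  have hf2 : ((Nat.factorial (n - 2*j)):ℝ) ≠ 0 := by positivity
  have h4 : ((4:ℝ)^j) ≠ 0 := by positivity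
  field_simp
  linear_combination (x^(n/2 - j)) * hcq

lemma alt_pos (x : ℝ) (hx : 0 < x) :
    ∀ v (g : ℕ → ℝ), (∀ k, k ≤ v → 0 < g k) → (∀ k, k < v → g (k+1) < x * g k) →
      0 < ∑ k ∈ Finset.range (v+1), (-1:ℝ)^k * g k * x^(v-k)
  | 0, g, hg, _ => by simpa using hg 0 le_rfl
  | 1, g, hg, hr => by
      have h0 := hr 0 (by norm_num)
      rw [Finset.sum_range_succ, Finset.sum_range_one]
      simp only [pow_zero, pow_one, Nat.sub_self]
      norm_num
      linarith
  | (v+2), g, hg, hr => by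
      have IH := alt_pos x hx v (fun k => g (k+2))
        (fun k hk => hg (k+2) (by omega)) (fun k hk => hr (k+2) (by omega))
      rw [Finset.sum_range_succ', Finset.sum_range_succ']
      have e : ∀ k, (-1:ℝ)^(k+1+1) * g (k+1+1) * x^(v+2-(k+1+1)) = (-1:ℝ)^k * g (k+2) * x^(v-k) := by
        intro k
        have : v+2-(k+1+1) = v - k := by omega
        rw [this, pow_add]
        ring
      simp only [e]
      have h0 := hr 0 (by omega)
      have hg0 := hg 0 (by omega)
      have t1 : (-1:ℝ)^(0+1) * g (0+1) * x^(v+2-(0+1)) + (-1:ℝ)^0 * g 0 * x^(v+2-0)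
          = x^(v+1) * (x * g 0 - g 1) := by
        have e1 : v+2-(0+1) = v+1 := by omega
        have e2 : v+2-0 = v+2 := by omega
        rw [e1, e2]
        ring
      have : 0 < x^(v+1) * (x * g 0 - g 1) := by
        apply mul_pos (by positivity)
        linarith
      linarith [IH]

lemma keyT (u t : ℝ) (ht : 20 ≤ t) (hp : 0 < t - u*(u+1)) (hq : 0 < t - (u+1)*(u+2))
    (h12 : 12 ≤ (u+1)*(u+2)) :
    (t - u*(u+1)) * (t - (u+1)*(u+2)) < (u+1)*(u+2)/2 * (t*(t-2)) := by
  have h1 : t - u*(u+1) ≤ t := by nlinarith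
  have h2 : t - (u+1)*(u+2) ≤ t := by nlinarith
  have hpq : (t - u*(u+1)) * (t - (u+1)*(u+2)) ≤ t*t :=
    mul_le_mul h1 h2 hq.le (by linarith)
  have htt : t*t < 6 * (t*(t-2)) := by nlinarith
  have hT : (0:ℝ) < t*(t-2) := by nlinarith
  nlinarith

lemma ratio_key (k n : ℕ) (hk : 1 ≤ k) (h : 2*(k+1) ≤ n) :
    ((((n:ℝ)-2*k-1)*((n:ℝ)-2*k)) * (((n:ℝ)+2*k+1)*((n:ℝ)+2*k+2)))
      < fcoef 1 n * (4*(2*(k:ℝ)+1)*(2*(k:ℝ)+2)) := by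
  rw [fcoef_one]
  have hxu : 2*(k:ℝ) + 2 ≤ (n:ℝ) := by
    have : ((2*(k+1) : ℕ) : ℝ) ≤ (n:ℝ) := by exact_mod_cast h
    push_cast at this; linarith
  have hu : (2:ℝ) ≤ 2*(k:ℝ) := by
    have : (1:ℝ) ≤ (k:ℝ) := by exact_mod_cast hk
    linarith
  have hx6 : (4:ℝ) ≤ (n:ℝ) := by linarith
  have ht : (20:ℝ) ≤ (n:ℝ)^2 + (n:ℝ) := by nlinarith
  have hp : 0 < (n:ℝ)^2 + (n:ℝ) - (2*(k:ℝ))*(2*(k:ℝ)+1) := by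
    nlinarith [mul_pos (show (0:ℝ) < (n:ℝ) - 2*(k:ℝ) by linarith)
      (show (0:ℝ) < (n:ℝ) + 2*(k:ℝ) + 1 by linarith)]
  have hq : 0 < (n:ℝ)^2 + (n:ℝ) - (2*(k:ℝ)+1)*(2*(k:ℝ)+2) := by
    nlinarith [mul_pos (show (0:ℝ) < (n:ℝ) - 2*(k:ℝ) - 1 by linarith)
      (show (0:ℝ) < (n:ℝ) + 2*(k:ℝ) + 2 by linarith)]
  have h12 : (12:ℝ) ≤ (2*(k:ℝ)+1)*(2*(k:ℝ)+2) := by nlinarith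
  have hkey := keyT (2*(k:ℝ)) ((n:ℝ)^2 + (n:ℝ)) ht hp hq h12
  nlinarith [hkey]

lemma ratio_lt (k n : ℕ) (hk : 1 ≤ k) (h : 2*(k+1) ≤ n) :
    fcoef (k+1) n < fcoef 1 n * fcoef k n := by
  have hs := fcoef_succ k n
  have hfk : 0 < fcoef k n := fcoef_pos (by omega)
  have hD : (0:ℝ) < 4*(2*(k:ℝ)+1)*(2*(k:ℝ)+2) := by positivity
  have key := ratio_key k n hk h
  nlinarith [mul_pos hfk (sub_pos.2 key), hs, hD]

lemma ratio_le (k n : ℕ) (h : 2*(k+1) ≤ n) :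
    fcoef (k+1) n ≤ fcoef 1 n * fcoef k n := by
  rcases Nat.eq_zero_or_pos k with rfl | hk
  · rw [fcoef_zero]; simp
  · exact (ratio_lt k n hk h).le

lemma keyT2 (u t : ℝ) (ht : 20 ≤ t) (hp : 0 < t - u*(u+1)) (hq : 0 < t - (u+1)*(u+2))
    (h12 : 56 ≤ (u+1)*(u+2)) :
    (t - u*(u+1)) * (t - (u+1)*(u+2)) < (u+1)*(u+2)/4 * (t*(t-2)) := by
  have h1 : t - u*(u+1) ≤ t := by nlinarith
  have h2 : t - (u+1)*(u+2) ≤ t := by nlinarith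
  have hpq : (t - u*(u+1)) * (t - (u+1)*(u+2)) ≤ t*t :=
    mul_le_mul h1 h2 hq.le (by linarith)
  have htt : t*t < 14 * (t*(t-2)) := by nlinarith
  have hT : (0:ℝ) < t*(t-2) := by nlinarith
  nlinarith

lemma ratio_lt_half (k n : ℕ) (hk : 3 ≤ k) (h : 2*(k+1) ≤ n) :
    fcoef (k+1) n < (fcoef 1 n / 2) * fcoef k n := by
  have hs := fcoef_succ k n
  have hfk : 0 < fcoef k n := fcoef_pos (by omega)
  have hD : (0:ℝ) < 4*(2*(k:ℝ)+1)*(2*(k:ℝ)+2) := by positivity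
  have key : ((((n:ℝ)-2*k-1)*((n:ℝ)-2*k)) * (((n:ℝ)+2*k+1)*((n:ℝ)+2*k+2)))
      < (fcoef 1 n / 2) * (4*(2*(k:ℝ)+1)*(2*(k:ℝ)+2)) := by
    rw [fcoef_one]
    have hxu : 2*(k:ℝ) + 2 ≤ (n:ℝ) := by
      have : ((2*(k+1) : ℕ) : ℝ) ≤ (n:ℝ) := by exact_mod_cast h
      push_cast at this; linarith
    have hu : (6:ℝ) ≤ 2*(k:ℝ) := by
      have : (3:ℝ) ≤ (k:ℝ) := by exact_mod_cast hk
      linarith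
    have hx6 : (8:ℝ) ≤ (n:ℝ) := by linarith
    have ht : (20:ℝ) ≤ (n:ℝ)^2 + (n:ℝ) := by nlinarith
    have hp : 0 < (n:ℝ)^2 + (n:ℝ) - (2*(k:ℝ))*(2*(k:ℝ)+1) := by
      nlinarith [mul_pos (show (0:ℝ) < (n:ℝ) - 2*(k:ℝ) by linarith)
        (show (0:ℝ) < (n:ℝ) + 2*(k:ℝ) + 1 by linarith)]
    have hq : 0 < (n:ℝ)^2 + (n:ℝ) - (2*(k:ℝ)+1)*(2*(k:ℝ)+2) := by
      nlinarith [mul_pos (show (0:ℝ) < (n:ℝ) - 2*(k:ℝ) - 1 by linarith)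
        (show (0:ℝ) < (n:ℝ) + 2*(k:ℝ) + 2 by linarith)]
    have h56 : (56:ℝ) ≤ (2*(k:ℝ)+1)*(2*(k:ℝ)+2) := by nlinarith
    have hkey := keyT2 (2*(k:ℝ)) ((n:ℝ)^2 + (n:ℝ)) ht hp hq h56
    nlinarith [hkey]
  nlinarith [mul_pos hfk (sub_pos.2 key), hs, hD]

end Aux
/-- For `n ≥ 2` the largest real root `λ_n` of `F_n` satisfies `m(n) ≤ λ_n ≤ f_1(n)`
with `m(n) = f_1(n)/2 + sqrt(f_1(n)²/4 − f_2(n))`; moreover `λ_n < f_1(n)` for `n ≥ 4`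
and `m(n) < λ_n` for `n ≥ 6`. -/
theorem maxroot_bounds (n : ℕ) (hn : 2 ≤ n) (lam : ℝ)
    (hlam : IsGreatest {x : ℝ | Fpoly n x = 0} lam) :
    fcoef 1 n / 2 + Real.sqrt ((fcoef 1 n) ^ 2 / 4 - fcoef 2 n) ≤ lam ∧
    lam ≤ fcoef 1 n ∧
    (4 ≤ n → lam < fcoef 1 n) ∧
    (6 ≤ n → fcoef 1 n / 2 + Real.sqrt ((fcoef 1 n) ^ 2 / 4 - fcoef 2 n) < lam) := by
  have hx2 : (2:ℝ) ≤ (n:ℝ) := by exact_mod_cast hn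
  have ha_pos : 0 < fcoef 1 n := fcoef_pos (by omega)
  have hν : 1 ≤ n/2 := by omega
  -- discriminant is nonnegative
  have hdisc : 0 ≤ (fcoef 1 n)^2/4 - fcoef 2 n := by
    rw [fcoef_one, fcoef_two]
    have ht6 : (6:ℝ) ≤ (n:ℝ)^2 + (n:ℝ) := by nlinarith
    have p3 : (0:ℝ) ≤ ((n:ℝ)^2+(n:ℝ))^2 + 30*((n:ℝ)^2+(n:ℝ)) - 144 := by nlinarith
    have key : (0:ℝ) ≤ ((n:ℝ)^2+(n:ℝ)) * (((n:ℝ)^2+(n:ℝ)) - 2)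
        * (((n:ℝ)^2+(n:ℝ))^2 + 30*((n:ℝ)^2+(n:ℝ)) - 144) / 768 := by
      apply div_nonneg _ (by norm_num)
      exact mul_nonneg (mul_nonneg (by linarith) (by linarith)) p3
    nlinarith [key]
  set s : ℝ := Real.sqrt ((fcoef 1 n)^2/4 - fcoef 2 n) with hsdef
  have hs_nonneg : 0 ≤ s := Real.sqrt_nonneg _
  have hs2 : s^2 = (fcoef 1 n)^2/4 - fcoef 2 n := Real.sq_sqrt hdisc
  set m : ℝ := fcoef 1 n / 2 + s with hmdef
  have hm_quad : m^2 - fcoef 1 n * m + fcoef 2 n = 0 := by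
    rw [hmdef]; linear_combination hs2
  have hm_ge : fcoef 1 n / 2 ≤ m := by rw [hmdef]; linarith
  have hm_pos : 0 < m := lt_of_lt_of_le (half_pos ha_pos) hm_ge
  -- upper bound : lam ≤ fcoef 1 n
  have hupper : lam ≤ fcoef 1 n := by
    by_contra hlt
    push_neg at hlt
    have hpos : 0 < Fpoly n lam := by
      rw [Fpoly_eq]
      refine alt_pos lam (by linarith) (n/2) (fun k => fcoef k n)
        (fun k hk => fcoef_pos (by omega)) (fun k hk => ?_)
      calc fcoef (k+1) n ≤ fcoef 1 n * fcoef k n := ratio_le k n (by omega)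
        _ < lam * fcoef k n := by
            have := fcoef_pos (show 2*k ≤ n by omega)
            nlinarith
    exact absurd hlam.1 (ne_of_gt hpos)
  -- F (fcoef 1 n) > 0 for n ≥ 4
  have hFa : 4 ≤ n → 0 < Fpoly n (fcoef 1 n) := by
    intro h4
    obtain ⟨w, hw⟩ : ∃ w, n/2 = w + 2 := ⟨n/2 - 2, by omega⟩
    rw [Fpoly_eq, hw]
    rw [Finset.sum_range_succ', Finset.sum_range_succ']
    have e : ∀ k, (-1:ℝ)^(k+1+1) * fcoef (k+1+1) n * (fcoef 1 n)^(w+2-(k+1+1))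
        = (-1:ℝ)^k * fcoef (k+2) n * (fcoef 1 n)^(w-k) := by
      intro k
      have : w+2-(k+1+1) = w - k := by omega
      rw [this, pow_add]; ring
    simp only [e]
    have hS : 0 < ∑ k ∈ Finset.range (w+1), (-1:ℝ)^k * fcoef (k+2) n * (fcoef 1 n)^(w-k) := by
      refine alt_pos (fcoef 1 n) ha_pos w (fun k => fcoef (k+2) n)
        (fun k hk => fcoef_pos (by omega)) (fun k hk => ratio_lt (k+2) n (by omega) (by omega))
    have e2 : (-1:ℝ)^(0+1) * fcoef (0+1) n * (fcoef 1 n)^(w+2-(0+1))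
        + (-1:ℝ)^0 * fcoef 0 n * (fcoef 1 n)^(w+2-0) = 0 := by
      rw [fcoef_zero]
      have e3 : w+2-(0+1) = w+1 := by omega
      have e4 : w+2-0 = w+2 := by omega
      rw [e3, e4, pow_succ]
      ring
    linarith
  -- strict upper bound for n ≥ 4
  have hstrict : 4 ≤ n → lam < fcoef 1 n := by
    intro h4
    rcases lt_or_eq_of_le hupper with h | h
    · exact h
    · exact absurd (h ▸ hlam.1) (ne_of_gt (hFa h4))
  -- strict lower bound for n ≥ 6
  have hlow6 : 6 ≤ n → m < lam := by
    intro h6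
    have hx6 : (6:ℝ) ≤ (n:ℝ) := by exact_mod_cast h6
    have hbpos : 0 < fcoef 2 n := by
      rw [fcoef_two]
      apply div_pos _ (by norm_num)
      refine mul_pos (mul_pos (mul_pos (mul_pos (mul_pos (mul_pos (mul_pos ?_ ?_) ?_) ?_) ?_) ?_) ?_) ?_ <;> linarith
    have hm_lt_a : m < fcoef 1 n := by
      have hslt : s < fcoef 1 n / 2 := by nlinarith [hs2, hs_nonneg, ha_pos, hbpos]
      rw [hmdef]; linarith
    have hFm : Fpoly n m < 0 := by
      obtain ⟨w, hw⟩ : ∃ w, n/2 = w + 3 := ⟨n/2 - 3, by omega⟩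
      rw [Fpoly_eq, hw]
      rw [Finset.sum_range_succ', Finset.sum_range_succ', Finset.sum_range_succ']
      have e : ∀ k, (-1:ℝ)^(k+1+1+1) * fcoef (k+1+1+1) n * m^(w+3-(k+1+1+1))
          = -((-1:ℝ)^k * fcoef (k+3) n * m^(w-k)) := by
        intro k
        have : w+3-(k+1+1+1) = w - k := by omega
        rw [this, pow_add, pow_add]; ring
      simp only [e]
      rw [Finset.sum_neg_distrib]
      have hS : 0 < ∑ k ∈ Finset.range (w+1), (-1:ℝ)^k * fcoef (k+3) n * m^(w-k) := by
        refine alt_pos m hm_pos w (fun k => fcoef (k+3) n)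
          (fun k hk => fcoef_pos (by omega)) (fun k hk => ?_)
        calc fcoef (k+3+1) n < (fcoef 1 n / 2) * fcoef (k+3) n :=
              ratio_lt_half (k+3) n (by omega) (by omega)
          _ ≤ m * fcoef (k+3) n := by
              have := fcoef_pos (show 2*(k+3) ≤ n by omega)
              nlinarith
      have e2 : (-1:ℝ)^(0+1+1) * fcoef (0+1+1) n * m^(w+3-(0+1+1))
          + ((-1:ℝ)^(0+1) * fcoef (0+1) n * m^(w+3-(0+1))
          + (-1:ℝ)^0 * fcoef 0 n * m^(w+3-0)) = m^(w+1) * (m^2 - fcoef 1 n * m + fcoef 2 n) := by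
        rw [fcoef_zero]
        have e3 : w+3-(0+1+1) = w+1 := by omega
        have e4 : w+3-(0+1) = w+2 := by omega
        have e5 : w+3-0 = w+3 := by omega
        rw [e3, e4, e5, pow_succ, pow_succ, pow_succ]
        ring
      have e6 : m^(w+1) * (m^2 - fcoef 1 n * m + fcoef 2 n) = 0 := by
        rw [hm_quad]; ring
      linarith
    have hcont : Continuous (Fpoly n) := by
      unfold Fpoly
      exact continuous_finset_sum _ (fun j _ => continuous_const.mul (continuous_pow j))
    have hsub := intermediate_value_Ioc hm_lt_a.le hcont.continuousOn
    have h0mem : (0:ℝ) ∈ Set.Ioc (Fpoly n m) (Fpoly n (fcoef 1 n)) :=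
      ⟨hFm, (hFa (by omega)).le⟩
    obtain ⟨c, hc, hc0⟩ := hsub h0mem
    exact lt_of_lt_of_le hc.1 (hlam.2 hc0)
  -- nonstrict lower bound
  have hlow : m ≤ lam := by
    rcases Nat.lt_or_ge n 6 with h6 | h6
    · rcases Nat.lt_or_ge n 4 with h4 | h4
      · -- n = 2 or 3 : fcoef 2 n = 0, m = fcoef 1 n is a root
        have hb0 : fcoef 2 n = 0 := by
          interval_cases n <;> rw [fcoef_two] <;> norm_num
        have hms : m = fcoef 1 n := by
          have : (fcoef 1 n)^2/4 - fcoef 2 n = (fcoef 1 n / 2)^2 := by rw [hb0]; ring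
          rw [hmdef, hsdef, this, Real.sqrt_sq (by linarith)]
          ring
        have hroot : Fpoly n m = 0 := by
          have h1 : n/2 = 1 := by omega
          rw [Fpoly_eq, h1, Finset.sum_range_succ, Finset.sum_range_one, fcoef_zero, hms]
          norm_num
        exact hlam.2 hroot
      · -- n = 4 or 5 : m is a root of the quadratic = Fpoly
        have hroot : Fpoly n m = 0 := by
          have h1 : n/2 = 2 := by omega
          rw [Fpoly_eq, h1, Finset.sum_range_succ, Finset.sum_range_succ,
            Finset.sum_range_one, fcoef_zero]
          norm_num
          linear_combination hm_quad
        exact hlam.2 hroot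
    · exact (hlow6 h6).le
  exact ⟨hlow, hupper, hstrict, hlow6⟩
end
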